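/- Let K be a field containing a primitive cube root of unity \omega, and let a, b, c, d \in K satisfy abcd = -1 and ac + bd = \omega(ad + bc), with (a+d^{-1})(c^{-1}+b) \neq 0. Then the cross ratio ((a+b)(c^{-1}+d^{-1}))/((a+d^{-1})(c^{-1}+b)) equals -\omega^2. -/

import Mathlib

theorem cross_ratio_three_torsion {K : Type*} [Field K] (h3 : (3 : K) ≠ 0)
    (ω a b c d : K) (hω : ω ^ 2 + ω + 1 = 0)
    (ha : a ≠ 0) (hb : b ≠ 0) (hc : c ≠ 0) (hd : d ≠ 0)
    (habcd : a * b * c * d = -1)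
    (hrel : a * c + b * d = ω * (a * d + b * c))
    (h1 : a + d⁻¹ ≠ 0) (h2 : c⁻¹ + b ≠ 0) :
    (a + b) * (c⁻¹ + d⁻¹) / ((a + d⁻¹) * (c⁻¹ + b)) = -ω ^ 2 := by
  have hden : (a + d⁻¹) * (c⁻¹ + b) ≠ 0 := mul_ne_zero h1 h2
  rw [div_eq_iff hden]
  field_simp
  linear_combination hrel + ω ^ 2 * habcd +
    (a * d + b * c) * hω
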